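/- Let K and F be closed subsets of a T₁ topological space X such that K ∩ F = K ∩ int(F), where int(F) denotes the interior of F. Then for every ordinal α, (K ∩ F)^(α) = K^(α) ∩ F. -/

import Mathlib

open Ordinal Set Filter Topology

/-- The `α`-th Cantor–Bendixson derivative of a set `A`, defined by transfinite
recursion: `A^(0) = A`, `A^(β+1) = (A^(β))'` (derived set in the ambient space),
and `A^(λ) = ⋂_{γ<λ} A^(γ)` at nonzero limit ordinals. -/
noncomputable def cbDeriv {X : Type*} [TopologicalSpace X] (A : Set X) (o : Ordinal) : Set X :=
  Ordinal.limitRecOn o A (fun _ ih => derivedSet ih)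
    (fun o _ ih => ⋂ (β : Ordinal) (h : β < o), ih β h)

lemma cbDeriv_zero {X : Type*} [TopologicalSpace X] (A : Set X) : cbDeriv A 0 = A :=
  Ordinal.limitRecOn_zero ..

lemma cbDeriv_succ {X : Type*} [TopologicalSpace X] (A : Set X) (o : Ordinal) :
    cbDeriv A (o + 1) = derivedSet (cbDeriv A o) :=
  Ordinal.limitRecOn_add_one ..

lemma cbDeriv_limit {X : Type*} [TopologicalSpace X] (A : Set X) {o : Ordinal}
    (ho : Order.IsSuccLimit o) : cbDeriv A o = ⋂ (β : Ordinal) (_ : β < o), cbDeriv A β :=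
  Ordinal.limitRecOn_limit _ _ _ _ ho

lemma cbDeriv_isClosed {X : Type*} [TopologicalSpace X] [T1Space X] {A : Set X}
    (hA : IsClosed A) (o : Ordinal) : IsClosed (cbDeriv A o) := by
  induction o using Ordinal.limitRecOn with
  | zero => rwa [cbDeriv_zero]
  | add_one o ih => rw [cbDeriv_succ]; exact isClosed_derivedSet _
  | limit o ho ih =>
    rw [cbDeriv_limit _ ho]
    exact isClosed_iInter fun β => isClosed_iInter fun hβ => ih β hβ

lemma cbDeriv_subset {X : Type*} [TopologicalSpace X] [T1Space X] {A : Set X}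
    (hA : IsClosed A) (o : Ordinal) : cbDeriv A o ⊆ A := by
  induction o using Ordinal.limitRecOn with
  | zero => rw [cbDeriv_zero]
  | add_one o ih =>
    rw [cbDeriv_succ]
    exact ((derivedSet_subset_closure _).trans
      ((cbDeriv_isClosed hA o).closure_subset)).trans ih
  | limit o ho ih =>
    rw [cbDeriv_limit _ ho]
    exact fun x hx => ih 0 ho.pos (mem_iInter₂.1 hx 0 ho.pos)

lemma derivedSet_inter_of_subset_interior {X : Type*} [TopologicalSpace X] [T1Space X]
    {S F : Set X} (hS : IsClosed S) (hF : IsClosed F) (hsub : S ∩ F ⊆ interior F) :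
    derivedSet (S ∩ F) = derivedSet S ∩ F := by
  apply subset_antisymm
  · exact subset_inter (derivedSet_mono _ _ inter_subset_left)
      (((derivedSet_mono _ _ inter_subset_right).trans (derivedSet_subset_closure F)).trans
        hF.closure_subset.subset)
  · rintro x ⟨hx, hxF⟩
    have hxS : x ∈ S := (derivedSet_subset_closure S).trans hS.closure_subset.subset hx
    have hxint : x ∈ interior F := hsub ⟨hxS, hxF⟩
    rw [mem_derivedSet, AccPt] at hx ⊢
    have hle : 𝓝[≠] x ≤ Filter.principal F := by
      refine le_trans ?_ (Filter.principal_mono.2 interior_subset)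
      exact Filter.le_principal_iff.2 (nhdsWithin_le_nhds (isOpen_interior.mem_nhds hxint))
    have : 𝓝[≠] x ⊓ Filter.principal (S ∩ F) = 𝓝[≠] x ⊓ Filter.principal S := by
      rw [← Filter.inf_principal, ← inf_assoc, inf_right_comm, inf_eq_left.2 hle]
    rwa [this]

theorem stmt1 {X : Type*} [TopologicalSpace X] [T1Space X] {K F : Set X}
    (hK : IsClosed K) (hF : IsClosed F) (h : K ∩ F = K ∩ interior F) (α : Ordinal) :
    cbDeriv (K ∩ F) α = cbDeriv K α ∩ F := by
  induction α using Ordinal.limitRecOn with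
  | zero => rw [cbDeriv_zero, cbDeriv_zero]
  | add_one o ih =>
    rw [cbDeriv_succ, cbDeriv_succ, ih]
    refine derivedSet_inter_of_subset_interior (cbDeriv_isClosed hK o) hF ?_
    intro x hx
    have : x ∈ K ∩ F := ⟨cbDeriv_subset hK o hx.1, hx.2⟩
    rw [h] at this
    exact this.2
  | limit o ho ih =>
    rw [cbDeriv_limit _ ho, cbDeriv_limit _ ho]
    ext x
    simp only [mem_iInter, mem_inter_iff]
    constructor
    · intro hx
      refine ⟨fun β hβ => (ih β hβ ▸ hx β hβ : _).1, ((ih 0 ho.pos ▸ hx 0 ho.pos : _)).2⟩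
    · rintro ⟨h1, h2⟩ β hβ
      rw [ih β hβ]; exact ⟨h1 β hβ, h2⟩
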